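/- Let θ : ℕ → ℝ be positive and nondecreasing with n/θ_n → ∞ as n → ∞ (Case A). Let λ_A(n) = ∑_{j=1}^n θ_n/(θ_n+j−1) and μ_A(n) = θ_n·log(1 + n/θ_n). Then the total variation distance between the Poisson distributions with means λ_A(n) and μ_A(n) satisfies d_TV(Poisson(λ_A(n)), Poisson(μ_A(n))) = O(1/√(θ_n·log(n/θ_n))); that is, there exist a constant C and an index N such that for all n ≥ N this distance is at most C/√(θ_n·log(n/θ_n)). -/

import Mathlib

open Filter

private lemma tsum_pow_div_fact (x : ℝ) : ∑' k : ℕ, x ^ k / (Nat.factorial k : ℝ) = Real.exp x := by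
  rw [Real.exp_eq_exp_ℝ]
  exact (NormedSpace.expSeries_div_hasSum_exp x).tsum_eq

private lemma key_tv (lam mu : ℝ) (hmu : 0 < mu) (hle : mu ≤ lam) :
    ∑' k : ℕ, |Real.exp (-lam) * lam ^ k / (Nat.factorial k) -
        Real.exp (-mu) * mu ^ k / (Nat.factorial k)| ≤ (lam - mu) / Real.sqrt mu := by
  have hlam : 0 < lam := hmu.trans_le hle
  set p : ℕ → ℝ := fun k => Real.exp (-lam) * lam ^ k / (Nat.factorial k) with hpdef
  set q : ℕ → ℝ := fun k => Real.exp (-mu) * mu ^ k / (Nat.factorial k) with hqdef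
  have hp0 : ∀ k, 0 ≤ p k := fun k => by
    have : (0:ℝ) < Nat.factorial k := by positivity
    simp only [hpdef]; positivity
  have hq0 : ∀ k, 0 ≤ q k := fun k => by
    have : (0:ℝ) < Nat.factorial k := by positivity
    simp only [hqdef]; positivity
  -- summability and total mass
  have hps : Summable p := by
    have := (Real.summable_pow_div_factorial lam).mul_left (Real.exp (-lam))
    rw [hpdef]; simpa [mul_div_assoc] using this
  have hqs : Summable q := by
    have := (Real.summable_pow_div_factorial mu).mul_left (Real.exp (-mu))
    rw [hqdef]; simpa [mul_div_assoc] using this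
  have htp : ∑' k, p k = 1 := by
    simp only [hpdef, mul_div_assoc]
    rw [tsum_mul_left, tsum_pow_div_fact, ← Real.exp_add]
    simp
  have htq : ∑' k, q k = 1 := by
    simp only [hqdef, mul_div_assoc]
    rw [tsum_mul_left, tsum_pow_div_fact, ← Real.exp_add]
    simp
  -- the geometric-mean sequence
  set s : ℝ := Real.sqrt (lam * mu) with hsdef
  set c : ℝ := Real.exp (-((lam + mu) / 2)) with hcdef
  set ab : ℕ → ℝ := fun k => c * (s ^ k / (Nat.factorial k)) with habdef
  have hs0 : 0 ≤ s := Real.sqrt_nonneg _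
  have hsq : s ^ 2 = lam * mu := Real.sq_sqrt (by positivity)
  have hcsq : c ^ 2 = Real.exp (-(lam + mu)) := by
    rw [hcdef, sq, ← Real.exp_add]; ring_nf
  have hab0 : ∀ k, 0 ≤ ab k := fun k => by
    have : (0:ℝ) < Nat.factorial k := by positivity
    simp only [habdef, hcdef]; positivity
  have hab : ∀ k, Real.sqrt (p k) * Real.sqrt (q k) = ab k := by
    intro k
    rw [← Real.sqrt_mul (hp0 k)]
    have hpq : p k * q k = ab k ^ 2 := by
      have hf : (0:ℝ) < Nat.factorial k := by positivity
      have hsk : (s ^ k) ^ 2 = (lam * mu) ^ k := by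
        rw [← pow_mul, mul_comm k 2, pow_mul, hsq]
      have he : Real.exp (-(lam + mu)) = Real.exp (-lam) * Real.exp (-mu) := by
        rw [← Real.exp_add]; ring_nf
      simp only [hpdef, hqdef, habdef]
      rw [mul_pow, div_pow, hcsq, hsk, he, mul_pow]
      field_simp
    rw [hpq, Real.sqrt_sq (hab0 k)]
  have habs : Summable ab := by
    exact (Real.summable_pow_div_factorial s).mul_left c
  have htab : ∑' k, ab k = Real.exp (s - (lam + mu) / 2) := by
    rw [habdef, tsum_mul_left, tsum_pow_div_fact, hcdef, ← Real.exp_add]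
    ring_nf
  set E : ℝ := Real.exp (s - (lam + mu) / 2) with hEdef
  have hsqlam : Real.sqrt lam ^ 2 = lam := Real.sq_sqrt hlam.le
  have hsqmu : Real.sqrt mu ^ 2 = mu := Real.sq_sqrt hmu.le
  have hs_eq : s = Real.sqrt lam * Real.sqrt mu := Real.sqrt_mul hlam.le mu
  have hE1 : E ≤ 1 := by
    rw [hEdef]
    have : s - (lam + mu) / 2 ≤ 0 := by
      nlinarith [sq_nonneg (Real.sqrt lam - Real.sqrt mu)]
    calc Real.exp (s - (lam + mu) / 2) ≤ Real.exp 0 := Real.exp_le_exp.2 this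
      _ = 1 := Real.exp_zero
  have h1E : 1 - E ≤ (lam + mu) / 2 - s := by
    have := Real.add_one_le_exp (s - (lam + mu) / 2)
    rw [hEdef]; linarith
  -- the squared-difference and squared-sum series
  set f : ℕ → ℝ := fun k => (Real.sqrt (p k) - Real.sqrt (q k)) ^ 2 with hfdef
  set g : ℕ → ℝ := fun k => (Real.sqrt (p k) + Real.sqrt (q k)) ^ 2 with hgdef
  have hfeq : ∀ k, f k = p k + q k - 2 * ab k := by
    intro k
    simp only [hfdef]
    rw [sub_sq, Real.sq_sqrt (hp0 k), Real.sq_sqrt (hq0 k), mul_assoc, hab k]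
    ring
  have hgeq : ∀ k, g k = p k + q k + 2 * ab k := by
    intro k
    simp only [hgdef]
    rw [add_sq, Real.sq_sqrt (hp0 k), Real.sq_sqrt (hq0 k), mul_assoc, hab k]
    ring
  have hfs : Summable f := by
    rw [show f = fun k => p k + q k - 2 * ab k from funext hfeq]
    exact (hps.add hqs).sub (habs.mul_left 2)
  have hgs : Summable g := by
    rw [show g = fun k => p k + q k + 2 * ab k from funext hgeq]
    exact (hps.add hqs).add (habs.mul_left 2)
  have htf : ∑' k, f k = 2 - 2 * E := by
    rw [show f = fun k => p k + q k - 2 * ab k from funext hfeq]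
    rw [Summable.tsum_sub (hps.add hqs) (habs.mul_left 2), Summable.tsum_add hps hqs, tsum_mul_left,
      htp, htq, htab]
    ring
  have htg : ∑' k, g k = 2 + 2 * E := by
    rw [show g = fun k => p k + q k + 2 * ab k from funext hgeq]
    rw [Summable.tsum_add (hps.add hqs) (habs.mul_left 2), Summable.tsum_add hps hqs, tsum_mul_left,
      htp, htq, htab]
    ring
  have hAle : ∑' k, f k ≤ (Real.sqrt lam - Real.sqrt mu) ^ 2 := by
    rw [htf]
    nlinarith [h1E]
  have hBle : ∑' k, g k ≤ 4 := by rw [htg]; linarith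
  have hf0 : ∀ k, 0 ≤ f k := fun k => sq_nonneg _
  have hg0 : ∀ k, 0 ≤ g k := fun k => sq_nonneg _
  have hdiff : Summable fun k => |p k - q k| := (hps.sub hqs).abs
  have hsqd : 0 ≤ Real.sqrt lam - Real.sqrt mu := by
    have := Real.sqrt_le_sqrt hle
    linarith
  -- finset Cauchy-Schwarz bound
  have hFin : ∀ F : Finset ℕ, ∑ k ∈ F, |p k - q k| ≤ 2 * (Real.sqrt lam - Real.sqrt mu) := by
    intro F
    have hcs := Finset.sum_mul_sq_le_sq_mul_sq F
      (fun k => |Real.sqrt (p k) - Real.sqrt (q k)|) (fun k => Real.sqrt (p k) + Real.sqrt (q k))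
    have heq : ∀ k, |Real.sqrt (p k) - Real.sqrt (q k)| * (Real.sqrt (p k) + Real.sqrt (q k))
        = |p k - q k| := by
      intro k
      have h1 : 0 ≤ Real.sqrt (p k) + Real.sqrt (q k) := by positivity
      have ha := Real.sq_sqrt (hp0 k)
      have hb := Real.sq_sqrt (hq0 k)
      have h2 : p k - q k = (Real.sqrt (p k) - Real.sqrt (q k)) * (Real.sqrt (p k) + Real.sqrt (q k)) := by
        linear_combination hb - ha
      rw [h2, abs_mul, abs_of_nonneg h1]
    have hF1 : ∑ k ∈ F, |Real.sqrt (p k) - Real.sqrt (q k)| ^ 2 ≤ (Real.sqrt lam - Real.sqrt mu) ^ 2 := by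
      refine le_trans ?_ hAle
      refine le_trans (le_of_eq ?_) (Summable.sum_le_tsum F (fun k _ => hf0 k) hfs)
      exact Finset.sum_congr rfl fun k _ => by rw [sq_abs]
    have hF2 : ∑ k ∈ F, (Real.sqrt (p k) + Real.sqrt (q k)) ^ 2 ≤ 4 := by
      refine le_trans ?_ hBle
      exact Summable.sum_le_tsum F (fun k _ => hg0 k) hgs
    have hsum_eq : ∑ k ∈ F, |Real.sqrt (p k) - Real.sqrt (q k)| * (Real.sqrt (p k) + Real.sqrt (q k))
        = ∑ k ∈ F, |p k - q k| := Finset.sum_congr rfl fun k _ => heq k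
    rw [hsum_eq] at hcs
    have hnn : 0 ≤ ∑ k ∈ F, |p k - q k| := Finset.sum_nonneg fun k _ => abs_nonneg _
    have hF1' : 0 ≤ ∑ k ∈ F, |Real.sqrt (p k) - Real.sqrt (q k)| ^ 2 :=
      Finset.sum_nonneg fun k _ => sq_nonneg _
    have hF2' : 0 ≤ ∑ k ∈ F, (Real.sqrt (p k) + Real.sqrt (q k)) ^ 2 :=
      Finset.sum_nonneg fun k _ => sq_nonneg _
    nlinarith [hcs, hF1, hF2, hF1', hF2', sq_nonneg (Real.sqrt lam - Real.sqrt mu)]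
  have hT : ∑' k, |p k - q k| ≤ 2 * (Real.sqrt lam - Real.sqrt mu) :=
    Summable.tsum_le_of_sum_le hdiff hFin
  refine hT.trans ?_
  -- 2(√lam - √mu) ≤ (lam - mu)/√mu
  rw [le_div_iff₀ (Real.sqrt_pos.2 hmu)]
  nlinarith [sq_nonneg (Real.sqrt lam - Real.sqrt mu), Real.sqrt_pos.2 hmu]

theorem stmt_10 (θ : ℕ → ℝ) (hpos : ∀ n, 0 < θ n) (hmono : Monotone θ)
    (hA : Tendsto (fun n : ℕ => (n : ℝ) / θ n) atTop atTop)
    (lamA : ℕ → ℝ) (hlamA : ∀ n, lamA n = ∑ j ∈ Finset.Icc 1 n, θ n / (θ n + (j : ℝ) - 1))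
    (muA : ℕ → ℝ) (hmuA : ∀ n, muA n = θ n * Real.log (1 + (n : ℝ) / θ n)) :
    ∃ C : ℝ, ∃ N : ℕ, ∀ n ≥ N,
      (1 / 2) * ∑' k : ℕ,
          |Real.exp (-lamA n) * lamA n ^ k / (Nat.factorial k) -
            Real.exp (-muA n) * muA n ^ k / (Nat.factorial k)| ≤
        C / Real.sqrt (θ n * Real.log ((n : ℝ) / θ n)) := by
  have hev : ∀ᶠ n : ℕ in atTop, (2:ℝ) ≤ (n : ℝ) / θ n := hA.eventually_ge_atTop 2
  obtain ⟨N, hN⟩ := eventually_atTop.mp hev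
  have main : ∀ n ≥ N, muA n ≤ lamA n ∧ lamA n - muA n ≤ 1 ∧ 0 < muA n ∧
      0 < θ n * Real.log ((n:ℝ)/θ n) ∧ θ n * Real.log ((n:ℝ)/θ n) ≤ muA n := by
    intro n hn
    set s : ℝ := θ n with hsdef
    have hs : 0 < s := hpos n
    have h2 : (2:ℝ) ≤ (n : ℝ) / s := hN n hn
    have hnpos : (0:ℝ) < n := by
      have := (le_div_iff₀ hs).mp h2
      nlinarith
    -- rewrite lamA as a sum over range n
    have hlam_eq : lamA n = ∑ i ∈ Finset.range n, s / (s + i) := by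
      rw [hlamA n, ← Finset.Ico_add_one_right_eq_Icc, Finset.sum_Ico_eq_sum_range]
      refine Finset.sum_congr (by norm_num) fun i _ => ?_
      push_cast
      ring_nf
      rw [hsdef]; ring
    -- rewrite muA as a telescoping sum
    have hmu_eq : muA n = ∑ i ∈ Finset.range n,
        s * (Real.log (s + (i + 1 : ℕ)) - Real.log (s + i)) := by
      rw [hmuA n, ← Finset.mul_sum]
      congr 1
      rw [Finset.sum_range_sub (fun i : ℕ => Real.log (s + i))]
      have h1 : 1 + (n:ℝ)/s = (s + n)/s := by field_simp
      rw [h1, Real.log_div (by positivity) (ne_of_gt hs)]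
      norm_num
    have hterm_up : ∀ i : ℕ, s * (Real.log (s + (i + 1 : ℕ)) - Real.log (s + i)) ≤ s / (s + i) := by
      intro i
      have hy : (0:ℝ) < s + i := by positivity
      have hlog : Real.log (s + (i+1:ℕ)) - Real.log (s + i) ≤ 1 / (s + i) := by
        rw [← Real.log_div (by positivity) (ne_of_gt hy)]
        have := Real.log_le_sub_one_of_pos (show (0:ℝ) < (s + (i+1:ℕ))/(s+i) by positivity)
        have heq : (s + (i+1:ℕ))/(s+i) - 1 = 1/(s+i) := by
          push_cast; field_simp; ring
        linarith [heq ▸ this]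
      calc s * (Real.log (s + (i + 1:ℕ)) - Real.log (s + i)) ≤ s * (1/(s+i)) := by
            exact mul_le_mul_of_nonneg_left hlog hs.le
        _ = s / (s+i) := by ring
    have hterm_lo : ∀ i : ℕ, s / (s + (i + 1 : ℕ)) ≤ s * (Real.log (s + (i + 1 : ℕ)) - Real.log (s + i)) := by
      intro i
      have hy : (0:ℝ) < s + i := by positivity
      have hy1 : (0:ℝ) < s + (i+1:ℕ) := by positivity
      have hlog : 1 / (s + (i+1:ℕ)) ≤ Real.log (s + (i+1:ℕ)) - Real.log (s + i) := by
        rw [← Real.log_div (by positivity) (ne_of_gt hy)]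
        have := Real.one_sub_inv_le_log_of_pos (show (0:ℝ) < (s + (i+1:ℕ))/(s+i) by positivity)
        have heq : 1 - ((s + (i+1:ℕ))/(s+i))⁻¹ = 1/(s + (i+1:ℕ)) := by
          push_cast
          rw [inv_div]
          field_simp
          ring
        linarith [heq ▸ this]
      calc s / (s + (i+1:ℕ)) = s * (1/(s + (i+1:ℕ))) := by ring
        _ ≤ _ := mul_le_mul_of_nonneg_left hlog hs.le
    constructor
    · rw [hlam_eq, hmu_eq]
      exact Finset.sum_le_sum fun i _ => hterm_up i
    refine ⟨?_, ?_, ?_, ?_⟩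
    · rw [hlam_eq, hmu_eq, ← Finset.sum_sub_distrib]
      have : ∀ i ∈ Finset.range n, s / (s + i) - s * (Real.log (s + (i+1:ℕ)) - Real.log (s + i))
          ≤ s / (s + i) - s / (s + (i+1:ℕ)) := fun i _ => by linarith [hterm_lo i]
      refine le_trans (Finset.sum_le_sum this) ?_
      have htel : ∑ i ∈ Finset.range n, ((fun i : ℕ => s / (s + i)) i - (fun i : ℕ => s / (s + i)) (i+1))
          = s / (s + (0:ℕ)) - s / (s + n) := Finset.sum_range_sub' (fun i : ℕ => s / (s + i)) n
      push_cast at htel ⊢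
      rw [htel]
      have : 0 ≤ s / (s + n) := by positivity
      have hss : s / (s + 0) = 1 := by field_simp; ring
      rw [hss] at *
      linarith
    · rw [hmuA n]
      have : (1:ℝ) < 1 + n/s := by nlinarith [h2]
      exact mul_pos hs (Real.log_pos this)
    · exact mul_pos hs (Real.log_pos (by linarith))
    · rw [hmuA n]
      refine mul_le_mul_of_nonneg_left ?_ hs.le
      exact Real.log_le_log (by positivity) (by linarith)
  refine ⟨1/2, N, fun n hn => ?_⟩
  obtain ⟨h1, h2, h3, h4, h5⟩ := main n hn
  have hkey := key_tv (lamA n) (muA n) h3 h1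
  have hsq1 : Real.sqrt (θ n * Real.log ((n:ℝ)/θ n)) ≤ Real.sqrt (muA n) := Real.sqrt_le_sqrt h5
  have hsqpos : 0 < Real.sqrt (θ n * Real.log ((n:ℝ)/θ n)) := Real.sqrt_pos.2 h4
  have hmusq : 0 < Real.sqrt (muA n) := Real.sqrt_pos.2 h3
  calc (1/2) * ∑' k : ℕ, |Real.exp (-lamA n) * lamA n ^ k / (Nat.factorial k) -
          Real.exp (-muA n) * muA n ^ k / (Nat.factorial k)|
      ≤ (1/2) * ((lamA n - muA n) / Real.sqrt (muA n)) := by linarith [hkey]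
    _ ≤ (1/2) * (1 / Real.sqrt (muA n)) := by gcongr
    _ ≤ (1/2) * (1 / Real.sqrt (θ n * Real.log ((n:ℝ)/θ n))) := by
        gcongr
    _ = (1/2) / Real.sqrt (θ n * Real.log ((n:ℝ)/θ n)) := by ring
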